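/- Let 0 < ρ < σ, and suppose Ls_k^l(σ) converges absolutely. Then Ls_k^l(σ) = Σ_{h=0}^{n} Ls_{k_h}^{l_h}(ρ) · Ls_{k^h}^{l^h}(ρ; σ), where k_h = (k₁,…,k_h), k^h = (k_{h+1},…,k_n), and similarly for l_h, l^h. -/

import Mathlib

open MeasureTheory Real

/-- `A θ = log |2 sin (θ/2)|`. -/
noncomputable def A (θ : ℝ) : ℝ := Real.log |2 * Real.sin (θ / 2)|

/-- Nested iterated integral; the list is in reverse order (outermost variable first). -/
noncomputable def LsNest (ρ : ℝ) : List (ℕ × ℕ) → ℝ → ℝ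
  | [] => fun _ => 1
  | p :: rest => fun σ => ∫ θ in ρ..σ, θ ^ p.2 * A θ ^ (p.1 - 1 - p.2) * LsNest ρ rest θ

/-- The iterated log-sine integral `Ls_k^l(ρ; σ)`. -/
noncomputable def Ls {n : ℕ} (k l : Fin n → ℕ) (ρ σ : ℝ) : ℝ :=
  (-1 : ℝ) ^ n * LsNest ρ ((List.ofFn fun u => (k u, l u)).reverse) σ

section Aux

lemma measurable_A : Measurable A :=
  Real.measurable_log.comp
    (continuous_abs.comp (continuous_const.mul (Real.continuous_sin.comp
      (continuous_id.div_const 2)))).measurable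

lemma A_neg (θ : ℝ) : A (-θ) = A θ := by
  unfold A
  rw [neg_div, Real.sin_neg, show 2 * -Real.sin (θ / 2) = -(2 * Real.sin (θ / 2)) by ring,
    abs_neg]

lemma A_periodic : Function.Periodic A (2 * π) := by
  intro θ
  unfold A
  rw [show (θ + 2 * π) / 2 = θ / 2 + π by ring, Real.sin_add_pi,
    show 2 * -Real.sin (θ / 2) = -(2 * Real.sin (θ / 2)) by ring, abs_neg]

lemma A_le {θ : ℝ} (h1 : 0 < θ) (h2 : θ ≤ π) : |A θ| ≤ |Real.log θ| + 1 := by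
  have hπ := Real.pi_pos
  have hπ4 := Real.pi_le_four
  have hs : 0 < Real.sin (θ / 2) :=
    Real.sin_pos_of_pos_of_lt_pi (by linarith) (by linarith)
  have habs : |2 * Real.sin (θ / 2)| = 2 * Real.sin (θ / 2) := abs_of_pos (by linarith)
  have hup : 2 * Real.sin (θ / 2) ≤ θ := by
    have := Real.sin_le (by linarith : (0:ℝ) ≤ θ / 2)
    linarith
  have hlo : 2 / π * θ ≤ 2 * Real.sin (θ / 2) := by
    have := Real.mul_le_sin (x := θ / 2) (by linarith) (by linarith)
    have h := mul_le_mul_of_nonneg_left this (by norm_num : (0:ℝ) ≤ 2)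
    calc 2 / π * θ = 2 * (2 / π * (θ / 2)) := by ring
      _ ≤ 2 * Real.sin (θ / 2) := h
  have hA1 : A θ ≤ Real.log θ := by
    rw [A, habs]
    exact Real.log_le_log (by linarith) hup
  have hA2 : Real.log θ - 1 ≤ A θ := by
    rw [A, habs]
    have h2θ : 0 < 2 / π * θ := by positivity
    have hlog : Real.log (2 / π * θ) ≤ Real.log (2 * Real.sin (θ / 2)) :=
      Real.log_le_log h2θ hlo
    have heq : Real.log (2 / π * θ) = -Real.log (π / 2) + Real.log θ := by
      rw [show (2:ℝ) / π = (π / 2)⁻¹ by rw [inv_div], Real.log_mul (by positivity) h1.ne',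
        Real.log_inv]
    have hπ2 : Real.log (π / 2) ≤ 1 := by
      have := Real.log_le_sub_one_of_pos (show (0:ℝ) < π / 2 by linarith)
      linarith
    linarith
  have hl1 := le_abs_self (Real.log θ)
  have hl2 := neg_abs_le (Real.log θ)
  rw [abs_le]
  constructor <;> linarith

lemma log_rpow_bound {ε : ℝ} (hε : 0 < ε) {θ : ℝ} (h1 : 0 < θ) (h2 : θ ≤ π) :
    |Real.log θ| + 1 ≤ (1 / ε + 1 + 4 * π ^ ε) * θ ^ (-ε) := by
  have hπ := Real.pi_pos
  have hθε : 0 < θ ^ (-ε) := Real.rpow_pos_of_pos h1 _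
  have hπε : 0 < (π : ℝ) ^ ε := Real.rpow_pos_of_pos hπ _
  have hdist : (1 / ε + 1 + 4 * π ^ ε) * θ ^ (-ε)
      = (1 / ε) * θ ^ (-ε) + θ ^ (-ε) + 4 * (π ^ ε * θ ^ (-ε)) := by ring
  rcases le_or_gt θ 1 with hle | hgt
  · have h1' : 1 ≤ θ ^ (-ε) :=
      Real.one_le_rpow_of_pos_of_le_one_of_nonpos h1 hle (by linarith)
    have hmain : -Real.log θ ≤ (1 / ε) * θ ^ (-ε) := by
      have h3 : Real.log (θ ^ (-ε)) ≤ θ ^ (-ε) - 1 := Real.log_le_sub_one_of_pos hθε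
      rw [Real.log_rpow h1] at h3
      have h4 : -Real.log θ = (1 / ε) * (-ε * Real.log θ) := by field_simp
      rw [h4]
      have h5 : (1 / ε) * (-ε * Real.log θ) ≤ (1 / ε) * (θ ^ (-ε) - 1) :=
        mul_le_mul_of_nonneg_left h3 (by positivity)
      have h6 : (1 / ε) * (θ ^ (-ε) - 1) ≤ (1 / ε) * θ ^ (-ε) := by
        have : (0:ℝ) ≤ 1 / ε := by positivity
        nlinarith
      linarith
    have habs : |Real.log θ| = -Real.log θ := abs_of_nonpos (Real.log_nonpos h1.le hle)
    have hpos : 0 ≤ 4 * (π ^ ε * θ ^ (-ε)) := by positivity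
    rw [habs, hdist]
    linarith
  · have habs : |Real.log θ| = Real.log θ := abs_of_nonneg (Real.log_nonneg hgt.le)
    have hlog : Real.log θ ≤ π - 1 := by
      have hl := Real.log_le_log h1 h2
      have := Real.log_le_sub_one_of_pos hπ
      linarith
    have hmono : π ^ (-ε) ≤ θ ^ (-ε) :=
      Real.rpow_le_rpow_of_nonpos h1 h2 (by linarith)
    have hone : π ^ ε * π ^ (-ε) = 1 := by
      rw [← Real.rpow_add hπ]
      simp
    have h4 : (4:ℝ) ≤ 4 * (π ^ ε * θ ^ (-ε)) := by
      have := mul_le_mul_of_nonneg_left hmono hπε.le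
      nlinarith
    have hrest : 0 ≤ (1 / ε) * θ ^ (-ε) + θ ^ (-ε) := by positivity
    have hπ4 := Real.pi_le_four
    rw [habs, hdist]
    linarith

lemma Am_int_0pi (m : ℕ) : IntervalIntegrable (fun θ => |A θ| ^ m) volume 0 π := by
  have hπ := Real.pi_pos
  set ε : ℝ := 1 / (2 * (m + 1)) with hεdef
  have hε : 0 < ε := by positivity
  set C : ℝ := 1 / ε + 1 + 4 * π ^ ε with hCdef
  have hC0 : 0 ≤ C := by positivity
  have hr : (-1 : ℝ) < -ε * m := by
    have h1 : ε * m < 1 := by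
      rw [hεdef]
      rw [div_mul_eq_mul_div, one_mul, div_lt_one (by positivity)]
      push_cast
      linarith
    linarith
  have hint : IntervalIntegrable (fun θ => C ^ m * θ ^ (-ε * (m : ℝ))) volume 0 π :=
    (intervalIntegral.intervalIntegrable_rpow' hr).const_mul _
  rw [intervalIntegrable_iff, Set.uIoc_of_le hπ.le] at hint ⊢
  refine Integrable.mono' hint ((measurable_A.abs.pow_const m).aestronglyMeasurable) ?_
  rw [ae_restrict_iff' measurableSet_Ioc]
  filter_upwards with θ hθ
  obtain ⟨h1, h2⟩ := hθ
  have hb : |A θ| ≤ C * θ ^ (-ε) := (A_le h1 h2).trans (log_rpow_bound hε h1 h2)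
  have hnorm : ‖|A θ| ^ m‖ = |A θ| ^ m := by
    rw [Real.norm_eq_abs, abs_of_nonneg (by positivity)]
  rw [hnorm]
  calc |A θ| ^ m ≤ (C * θ ^ (-ε)) ^ m := pow_le_pow_left₀ (abs_nonneg _) hb m
    _ = C ^ m * θ ^ (-ε * (m : ℝ)) := by
        rw [mul_pow, ← Real.rpow_natCast (θ ^ (-ε)) m, ← Real.rpow_mul h1.le]

lemma Am_int (m : ℕ) (a b : ℝ) : IntervalIntegrable (fun θ => |A θ| ^ m) volume a b := by
  have hπ3 := Real.pi_gt_three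
  set g : ℝ → ℝ := fun θ => |A θ| ^ m with hg
  have hper : Function.Periodic g (2 * π) := fun x => by
    simp only [hg, A_periodic x]
  have base : IntervalIntegrable g volume (-π) π := by
    have h1 := Am_int_0pi m
    have h2 := (IntervalIntegrable.iff_comp_neg enorm_ne_top).mp h1
    have h3 : (fun x => g (-x)) = g := funext fun x => by simp only [hg, A_neg]
    rw [h3, neg_zero] at h2
    exact h2.symm.trans h1
  have step : ∀ N : ℕ, IntervalIntegrable g volume (-π - 2 * π * N) (π + 2 * π * N) := by
    intro N
    induction N with
    | zero => simpa using base
    | succ N ih =>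
      have hL : IntervalIntegrable g volume (-π - 2 * π * (N + 1 : ℕ)) (-π - 2 * π * N) := by
        have h := base.comp_add_right (2 * π * (N + 1 : ℕ))
        have heq : (fun x => g (x + 2 * π * (N + 1 : ℕ))) = g := funext fun x => by
          have := (hper.nat_mul (N + 1)) x
          calc g (x + 2 * π * (N + 1 : ℕ)) = g (x + (N + 1 : ℕ) * (2 * π)) := by ring_nf
            _ = g x := this
        rw [heq] at h
        have e1 : -π - 2 * π * ((N : ℝ) + 1) = -π - 2 * π * ((N + 1 : ℕ) : ℝ) := by
          push_cast; ring
        have e2 : -π - 2 * π * (N : ℝ) = π - 2 * π * ((N + 1 : ℕ) : ℝ) := by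
          push_cast; ring
        push_cast
        rw [e1, e2]
        exact h
      have hR : IntervalIntegrable g volume (π + 2 * π * N) (π + 2 * π * (N + 1 : ℕ)) := by
        have h := base.comp_add_right (-(2 * π * (N + 1 : ℕ)))
        have heq : (fun x => g (x + -(2 * π * (N + 1 : ℕ)))) = g := funext fun x => by
          have := hper.sub_nat_mul_eq (x := x) (N + 1)
          calc g (x + -(2 * π * (N + 1 : ℕ))) = g (x - (N + 1 : ℕ) * (2 * π)) := by ring_nf
            _ = g x := this
        rw [heq] at h
        have e1 : π + 2 * π * (N : ℝ) = -π - -(2 * π * ((N + 1 : ℕ) : ℝ)) := by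
          push_cast; ring
        have e2 : π + 2 * π * ((N : ℝ) + 1) = π - -(2 * π * ((N + 1 : ℕ) : ℝ)) := by
          push_cast; ring
        push_cast
        rw [e1, e2]
        exact h
      push_cast at hL hR ⊢
      exact (hL.trans ih).trans hR
  obtain ⟨N, hN⟩ := exists_nat_ge (max |a| |b|)
  refine (step N).mono_set ?_
  have hN0 : (0:ℝ) ≤ (N : ℝ) := Nat.cast_nonneg N
  have hmax : |a| ≤ (N : ℝ) := le_trans (le_max_left _ _) hN
  have hmax' : |b| ≤ (N : ℝ) := le_trans (le_max_right _ _) hN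
  apply Set.uIcc_subset_uIcc <;> rw [Set.mem_uIcc] <;> left <;> constructor
  · nlinarith [neg_abs_le a, abs_nonneg a]
  · nlinarith [le_abs_self a, abs_nonneg a]
  · nlinarith [neg_abs_le b, abs_nonneg b]
  · nlinarith [le_abs_self b, abs_nonneg b]

lemma f_mul_cont_int (p : ℕ × ℕ) {g : ℝ → ℝ} (hg : Continuous g) (a b : ℝ) :
    IntervalIntegrable (fun θ => θ ^ p.2 * A θ ^ (p.1 - 1 - p.2) * g θ) volume a b := by
  set m := p.1 - 1 - p.2 with hm
  obtain ⟨M, hM⟩ := isCompact_uIcc.exists_bound_of_continuousOn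
    (f := fun θ : ℝ => θ ^ p.2 * g θ) ((continuous_pow p.2).mul hg).continuousOn
  refine IntervalIntegrable.mono_fun ((Am_int m a b).const_mul M)
    (((measurable_id.pow_const p.2).mul (measurable_A.pow_const m)).mul
      hg.measurable).aestronglyMeasurable ?_
  rw [Filter.EventuallyLE, ae_restrict_iff' measurableSet_uIoc]
  filter_upwards with θ hθ
  have hθ' : θ ∈ Set.uIcc a b := Set.Ioc_subset_Icc_self hθ
  have h1 := hM θ hθ'
  rw [Real.norm_eq_abs] at h1
  rw [Real.norm_eq_abs, Real.norm_eq_abs]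
  calc |θ ^ p.2 * A θ ^ m * g θ| = |θ ^ p.2 * g θ * A θ ^ m| := by ring_nf
    _ = |θ ^ p.2 * g θ| * |A θ| ^ m := by rw [abs_mul, abs_pow]
    _ ≤ M * |A θ| ^ m := mul_le_mul_of_nonneg_right h1 (by positivity)
    _ ≤ |M * |A θ| ^ m| := le_abs_self _

lemma LsNest_cont (ρ : ℝ) : ∀ L : List (ℕ × ℕ), Continuous (LsNest ρ L)
  | [] => continuous_const
  | p :: L => by
    have h := LsNest_cont ρ L
    exact intervalIntegral.continuous_primitive (fun a b => f_mul_cont_int p h a b) ρ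

lemma LsNest_intInt (ρ ρ' : ℝ) (p : ℕ × ℕ) (L : List (ℕ × ℕ)) (a b : ℝ) :
    IntervalIntegrable (fun θ => θ ^ p.2 * A θ ^ (p.1 - 1 - p.2) * LsNest ρ' L θ)
      volume a b :=
  f_mul_cont_int p (LsNest_cont ρ' L) a b

lemma LsNest_split (ρ : ℝ) : ∀ (L : List (ℕ × ℕ)) (σ : ℝ),
    LsNest 0 L σ = ∑ j ∈ Finset.range (L.length + 1),
      LsNest ρ (L.take j) σ * LsNest 0 (L.drop j) ρ
  | [], σ => by simp [LsNest]
  | q :: L, σ => by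
    have hIH : ∀ θ : ℝ, LsNest 0 L θ = ∑ j ∈ Finset.range (L.length + 1),
        LsNest ρ (L.take j) θ * LsNest 0 (L.drop j) ρ := fun θ => LsNest_split ρ L θ
    have h1 : LsNest 0 (q :: L) σ =
        LsNest 0 (q :: L) ρ +
          ∫ θ in ρ..σ, θ ^ q.2 * A θ ^ (q.1 - 1 - q.2) * LsNest 0 L θ := by
      show (∫ θ in (0:ℝ)..σ, θ ^ q.2 * A θ ^ (q.1 - 1 - q.2) * LsNest 0 L θ) = _
      rw [← intervalIntegral.integral_add_adjacent_intervals
        (LsNest_intInt 0 0 q L 0 ρ) (LsNest_intInt 0 0 q L ρ σ)]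
      rfl
    have h2 : (∫ θ in ρ..σ, θ ^ q.2 * A θ ^ (q.1 - 1 - q.2) * LsNest 0 L θ)
        = ∑ j ∈ Finset.range (L.length + 1),
            LsNest ρ (q :: L.take j) σ * LsNest 0 (L.drop j) ρ := by
      calc (∫ θ in ρ..σ, θ ^ q.2 * A θ ^ (q.1 - 1 - q.2) * LsNest 0 L θ)
          = ∫ θ in ρ..σ, ∑ j ∈ Finset.range (L.length + 1),
              (θ ^ q.2 * A θ ^ (q.1 - 1 - q.2) * LsNest ρ (L.take j) θ) *
                LsNest 0 (L.drop j) ρ := by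
            apply intervalIntegral.integral_congr
            intro θ _
            dsimp only
            rw [hIH θ, Finset.mul_sum]
            exact Finset.sum_congr rfl fun j _ => by ring
        _ = ∑ j ∈ Finset.range (L.length + 1),
              ∫ θ in ρ..σ, (θ ^ q.2 * A θ ^ (q.1 - 1 - q.2) * LsNest ρ (L.take j) θ) *
                LsNest 0 (L.drop j) ρ := by
            apply intervalIntegral.integral_finset_sum
            intro j _
            exact (LsNest_intInt ρ ρ q (L.take j) ρ σ).mul_const _
        _ = ∑ j ∈ Finset.range (L.length + 1),
              LsNest ρ (q :: L.take j) σ * LsNest 0 (L.drop j) ρ := by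
            refine Finset.sum_congr rfl fun j _ => ?_
            rw [intervalIntegral.integral_mul_const]
            rfl
    rw [h1, h2, show (q :: L).length + 1 = (L.length + 1) + 1 from rfl,
      Finset.sum_range_succ'
        (fun j => LsNest ρ ((q :: L).take j) σ * LsNest 0 ((q :: L).drop j) ρ) (L.length + 1)]
    have hzero : LsNest ρ ((q :: L).take 0) σ * LsNest 0 ((q :: L).drop 0) ρ
        = LsNest 0 (q :: L) ρ := by
      simp [LsNest]
    rw [hzero, add_comm (LsNest 0 (q :: L) ρ)]
    exact congrArg (· + LsNest 0 (q :: L) ρ) (Finset.sum_congr rfl fun j _ => rfl)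

end Aux

/-- Decomposition formula: if `Ls_k^l(σ)` converges absolutely and `0 < ρ < σ`, then
`Ls_k^l(σ) = Σ_{h=0}^{n} Ls_{k_h}^{l_h}(ρ) Ls_{k^h}^{l^h}(ρ; σ)`. -/
theorem stmt3 (n : ℕ) (k l : Fin n → ℕ) (hk : ∀ u, 1 ≤ k u) (ρ σ : ℝ)
    (hρ : 0 < ρ) (hρσ : ρ < σ)
    (habs : IntegrableOn
      (fun θ : Fin n → ℝ => ∏ u, θ u ^ l u * A (θ u) ^ (k u - 1 - l u))
      {θ : Fin n → ℝ | (∀ u, 0 < θ u ∧ θ u < σ) ∧ ∀ u v : Fin n, u < v → θ u < θ v}) :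
    Ls k l 0 σ = ∑ h : Fin (n + 1),
      Ls (fun u : Fin h.1 => k ⟨u.1, lt_of_lt_of_le u.isLt (Nat.lt_succ_iff.mp h.isLt)⟩)
        (fun u : Fin h.1 => l ⟨u.1, lt_of_lt_of_le u.isLt (Nat.lt_succ_iff.mp h.isLt)⟩) 0 ρ *
      Ls (fun u : Fin (n - h.1) => k ⟨h.1 + u.1, by have h1 := u.isLt; have h2 := h.isLt; omega⟩)
        (fun u : Fin (n - h.1) => l ⟨h.1 + u.1, by have h1 := u.isLt; have h2 := h.isLt; omega⟩)
        ρ σ := by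
  have hh' : ∀ h : Fin (n + 1), h.1 ≤ n := fun h => Nat.lt_succ_iff.mp h.isLt
  set P : List (ℕ × ℕ) := List.ofFn fun u => (k u, l u) with hP
  have hPlen : P.length = n := by simp [hP]
  have hrevlen : P.reverse.length = n := by simp [hPlen]
  have hL : Ls k l 0 σ = ∑ j ∈ Finset.range (n + 1), (-1 : ℝ) ^ n *
      (LsNest ρ (P.reverse.take (n - j)) σ * LsNest 0 (P.reverse.drop (n - j)) ρ) := by
    have h0 : Ls k l 0 σ = (-1 : ℝ) ^ n * LsNest 0 P.reverse σ := rfl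
    rw [h0, LsNest_split ρ P.reverse σ, hrevlen, Finset.mul_sum,
      ← Finset.sum_range_reflect (fun j => (-1 : ℝ) ^ n *
        (LsNest ρ (P.reverse.take (n - j)) σ * LsNest 0 (P.reverse.drop (n - j)) ρ)) (n + 1)]
    refine Finset.sum_congr rfl fun j hj => ?_
    have hj' : j ≤ n := Nat.lt_succ_iff.mp (Finset.mem_range.mp hj)
    rw [show n - (n + 1 - 1 - j) = j from by omega]
  rw [hL, ← Fin.sum_univ_eq_sum_range (fun j => (-1 : ℝ) ^ n *
    (LsNest ρ (P.reverse.take (n - j)) σ * LsNest 0 (P.reverse.drop (n - j)) ρ)) (n + 1)]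
  refine (Finset.sum_congr rfl fun h _ => ?_).symm
  have hh : h.1 ≤ n := hh' h
  have e1 : (List.ofFn fun u : Fin h.1 =>
      (k ⟨u.1, lt_of_lt_of_le u.isLt hh⟩, l ⟨u.1, lt_of_lt_of_le u.isLt hh⟩)) = P.take h.1 := by
    apply List.ext_getElem
    · simp [hP, Nat.min_eq_left hh]
    · intro i hi1 hi2
      simp [hP, List.getElem_take, List.getElem_ofFn]
  have e2 : (List.ofFn fun u : Fin (n - h.1) =>
      (k ⟨h.1 + u.1, by omega⟩, l ⟨h.1 + u.1, by omega⟩)) = P.drop h.1 := by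
    apply List.ext_getElem
    · simp [hP]
    · intro i hi1 hi2
      simp [hP, List.getElem_drop, List.getElem_ofFn]
  have f1 : Ls (fun u : Fin h.1 => k ⟨u.1, lt_of_lt_of_le u.isLt (Nat.lt_succ_iff.mp h.isLt)⟩)
      (fun u : Fin h.1 => l ⟨u.1, lt_of_lt_of_le u.isLt (Nat.lt_succ_iff.mp h.isLt)⟩) 0 ρ
      = (-1 : ℝ) ^ h.1 * LsNest 0 (P.take h.1).reverse ρ := by
    rw [Ls]
    congr 2
    exact congrArg List.reverse e1
  have f2 : Ls (fun u : Fin (n - h.1) =>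
        k ⟨h.1 + u.1, by have h1 := u.isLt; have h2 := h.isLt; omega⟩)
      (fun u : Fin (n - h.1) =>
        l ⟨h.1 + u.1, by have h1 := u.isLt; have h2 := h.isLt; omega⟩) ρ σ
      = (-1 : ℝ) ^ (n - h.1) * LsNest ρ (P.drop h.1).reverse σ := by
    rw [Ls]
    congr 2
    exact congrArg List.reverse e2
  rw [f1, f2]
  have g1 : P.reverse.take (n - h.1) = (P.drop h.1).reverse := by
    rw [List.take_reverse, hPlen, show n - (n - h.1) = h.1 from by omega]
  have g2 : P.reverse.drop (n - h.1) = (P.take h.1).reverse := by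
    rw [List.drop_reverse, hPlen, show n - (n - h.1) = h.1 from by omega]
  rw [g1, g2]
  have hpow : (-1 : ℝ) ^ h.1 * (-1 : ℝ) ^ (n - h.1) = (-1 : ℝ) ^ n := by
    rw [← pow_add]
    congr 1
    omega
  calc (-1 : ℝ) ^ h.1 * LsNest 0 (P.take h.1).reverse ρ *
        ((-1 : ℝ) ^ (n - h.1) * LsNest ρ (P.drop h.1).reverse σ)
      = ((-1 : ℝ) ^ h.1 * (-1 : ℝ) ^ (n - h.1)) *
          (LsNest ρ (P.drop h.1).reverse σ * LsNest 0 (P.take h.1).reverse ρ) := by ring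
    _ = (-1 : ℝ) ^ n *
          (LsNest ρ (P.drop h.1).reverse σ * LsNest 0 (P.take h.1).reverse ρ) := by rw [hpow]
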